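/- Let N be a normal subgroup of a finite group G and H a subgroup of G with G = HN. Then there exists a subgroup H₁ ≤ H such that G = H₁N and H₁ ∩ N is contained in the Frattini subgroup of H₁; moreover, for such an H₁, the set of prime divisors of |H₁| equals the set of prime divisors of [G : N]. -/

import Mathlib

open Pointwise

/-- `K` is a complement of `N` inside the subgroup `H` of `G`:
`K ≤ H`, `K ∩ N = 1` and `KN = H` (as sets). -/
def IsComplementOfIn {G : Type*} [Group G] (K N H : Subgroup G) : Prop :=
  K ≤ H ∧ K ⊓ N = ⊥ ∧ (K : Set G) * (N : Set G) = (H : Set G)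

/-- `N` has a complement in the subgroup `H` of `G`. -/
def HasComplementIn {G : Type*} [Group G] (N H : Subgroup G) : Prop :=
  ∃ K : Subgroup G, IsComplementOfIn K N H

section Aux

variable {G : Type*} [Group G] [Finite G]

lemma aux_not_le_frattini {K : Subgroup G} {D : Subgroup K}
    (h : ¬ D ≤ frattini K) : ∃ M : Subgroup K, IsCoatom M ∧ ¬ D ≤ M := by
  by_contra hc
  push_neg at hc
  exact h (le_iInf₂ fun M hM => hc M hM)

lemma aux_index_subgroupOf (N H₁ : Subgroup G) [N.Normal] (h : H₁ ⊔ N = ⊤) :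
    (N.subgroupOf H₁).index = N.index := by
  rw [← Subgroup.relIndex, ← Subgroup.relIndex_sup_right, h, Subgroup.relIndex_top_right]

/-- Part 2: the primes dividing `|H₁|` are exactly those dividing `[G:N]`. -/
lemma aux_primes (N H₁ : Subgroup G) [N.Normal]
    (hsup : H₁ ⊔ N = ⊤) (hfr : (H₁ ⊓ N).subgroupOf H₁ ≤ frattini H₁)
    (p : ℕ) (hp : p.Prime) : p ∣ Nat.card H₁ ↔ p ∣ N.index := by
  haveI : Fact p.Prime := ⟨hp⟩
  set D : Subgroup H₁ := N.subgroupOf H₁ with hDdef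
  rw [Subgroup.inf_subgroupOf_left] at hfr
  have hidx : D.index = N.index := aux_index_subgroupOf N H₁ hsup
  have hcard : Nat.card D * D.index = Nat.card H₁ := Subgroup.card_mul_index D
  constructor
  · intro hdvd
    by_contra hnd
    -- p divides |D|
    have hpD : p ∣ Nat.card D := by
      rcases (hp.dvd_mul.mp (hcard ▸ hdvd)) with h | h
      · exact h
      · exact absurd (hidx ▸ h) hnd
    -- take a Sylow p-subgroup of D
    obtain ⟨P⟩ : Nonempty (Sylow p D) := inferInstance
    set Q : Subgroup H₁ := (P : Subgroup D).map D.subtype with hQdef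
    have hQD : Q ≤ D := Subgroup.map_subtype_le _
    -- Frattini argument
    have hFA : Subgroup.normalizer (Q : Set H₁) ⊔ D = ⊤ := Sylow.normalizer_sup_eq_top P
    have hnorm : Subgroup.normalizer (Q : Set H₁) = ⊤ := by
      apply frattini_nongenerating
      rw [eq_top_iff, ← hFA]
      exact sup_le le_sup_left (hfr.trans le_sup_right)
    haveI hQnormal : Q.Normal := Subgroup.normalizer_eq_top_iff.mp hnorm
    -- p divides |Q|
    have hcardQ : Nat.card Q = Nat.card (P : Subgroup D) :=
      Nat.card_congr (Subgroup.equivMapOfInjective _ _ D.subtype_injective).symm.toEquiv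
    have hpQ : p ∣ Nat.card Q := by
      rw [hcardQ, Sylow.card_eq_multiplicity]
      exact dvd_pow_self p (Nat.Prime.factorization_pos_of_dvd hp Nat.card_pos.ne' hpD).ne'
    -- p does not divide the index of Q in H₁
    have hrel : Q.relIndex D = (P : Subgroup D).index := by
      rw [Subgroup.relIndex, hQdef, Subgroup.subgroupOf,
        Subgroup.comap_map_eq_self_of_injective D.subtype_injective]
    have hQidx : ¬ p ∣ Q.index := by
      rw [← Subgroup.relIndex_mul_index hQD]
      refine hp.not_dvd_mul ?_ (hidx ▸ hnd)
      rw [hrel]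
      intro hcontra
      have hcop := Sylow.card_coprime_index P
      have hp1 : p ∣ Nat.gcd (Nat.card (P : Subgroup D)) (P : Subgroup D).index :=
        Nat.dvd_gcd (hcardQ ▸ hpQ) hcontra
      rw [Nat.Coprime] at hcop
      rw [hcop] at hp1
      exact hp.ne_one (Nat.dvd_one.mp hp1)
    -- Schur–Zassenhaus
    have hcop : Nat.Coprime (Nat.card Q) Q.index := by
      obtain ⟨n, hn⟩ := (P.2.map D.subtype).exists_card_eq
      rw [hn]
      exact Nat.Coprime.pow_left n ((hp.coprime_iff_not_dvd).mpr hQidx)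
    obtain ⟨K, hK⟩ := Subgroup.exists_right_complement'_of_coprime hcop
    have hKtop : K = ⊤ := by
      apply frattini_nongenerating
      rw [eq_top_iff, ← hK.sup_eq_top]
      exact sup_le ((hQD.trans hfr).trans le_sup_right) le_sup_left
    have hQbot : Q = ⊥ := by
      have hdj := hK.disjoint
      rw [hKtop, disjoint_top] at hdj
      exact hdj
    rw [hQbot, Nat.card_eq_one_iff_unique.mpr ⟨inferInstance, ⟨1⟩⟩] at hpQ
    exact hp.one_lt.ne' (Nat.dvd_one.mp hpQ)
  · intro hdvd
    rw [← hcard, hidx]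
    exact Dvd.dvd.mul_left hdvd _
end Aux

/-- Let `N ⊴ G` and `H ≤ G` with `G = HN`. Then there is `H₁ ≤ H` with `G = H₁N` and
`H₁ ∩ N ≤ Φ(H₁)`; moreover, for any such `H₁`, the primes dividing `|H₁|` are exactly
the primes dividing `[G : N]`. -/
theorem exists_le_frattini_inter {G : Type*} [Group G] [Finite G]
    (N H : Subgroup G) [N.Normal] (hHN : (H : Set G) * (N : Set G) = Set.univ) :
    (∃ H₁ : Subgroup G, H₁ ≤ H ∧ (H₁ : Set G) * (N : Set G) = Set.univ ∧
      (H₁ ⊓ N).subgroupOf H₁ ≤ frattini H₁) ∧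
    (∀ H₁ : Subgroup G, H₁ ≤ H → (H₁ : Set G) * (N : Set G) = Set.univ →
      (H₁ ⊓ N).subgroupOf H₁ ≤ frattini H₁ →
      ∀ p : ℕ, p.Prime → (p ∣ Nat.card H₁ ↔ p ∣ N.index)) := by
  have key : ∀ K : Subgroup G, ((K : Set G) * (N : Set G) = Set.univ ↔ K ⊔ N = ⊤) := by
    intro K
    rw [← Subgroup.mul_normal K N, Subgroup.coe_eq_univ]
  constructor
  · -- existence via a minimal element
    have hfin : (Set.univ : Set (Subgroup G)).Finite := Set.finite_univ
    obtain ⟨K, ⟨hKH, hKsup⟩, hmin⟩ :=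
      Set.Finite.exists_minimalFor id {K : Subgroup G | K ≤ H ∧ K ⊔ N = ⊤}
        (Set.toFinite _) ⟨H, le_rfl, (key H).mp hHN⟩
    refine ⟨K, hKH, (key K).mpr hKsup, ?_⟩
    by_contra hc
    obtain ⟨M, hM, hDM⟩ := aux_not_le_frattini hc
    set M' : Subgroup G := M.map K.subtype with hM'def
    have hM'K : M' ≤ K := Subgroup.map_subtype_le M
    have hM'sup : M' ⊔ N = ⊤ := by
      rw [eq_top_iff, ← hKsup]
      refine sup_le ?_ le_sup_right
      intro k hk
      have hDnorm : ((K ⊓ N).subgroupOf K).Normal := by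
        rw [Subgroup.inf_subgroupOf_left]; infer_instance
      haveI := hDnorm
      have hsup2 : M ⊔ (K ⊓ N).subgroupOf K = ⊤ := hM.2 _ (left_lt_sup.mpr hDM)
      have hmem : ((⟨k, hk⟩ : K)) ∈ (M : Set K) * ((K ⊓ N).subgroupOf K : Set K) := by
        rw [← Subgroup.mul_normal, hsup2]
        simp
      obtain ⟨m, hm, d, hd, hmd⟩ := hmem
      have hkeq : k = (m : G) * ((d : K) : G) := by
        have := congrArg (Subtype.val) hmd
        simpa using this.symm
      rw [hkeq]
      exact Subgroup.mul_mem_sup ⟨m, hm, rfl⟩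
        ((Subgroup.mem_subgroupOf.mp hd).2)
    have hM'H : M' ≤ H := hM'K.trans hKH
    have heq : id K = id M' := le_antisymm (@hmin M' ⟨hM'H, hM'sup⟩ hM'K) hM'K
    simp only [id] at heq
    -- M' = K contradicts M being a coatom
    apply hM.1
    apply Subgroup.map_injective K.subtype_injective
    rw [← MonoidHom.range_eq_map, Subgroup.range_subtype]
    exact heq.symm
  · intro H₁ _ hsup hfr p hp
    exact aux_primes N H₁ ((key H₁).mp hsup) hfr p hp
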